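/- arXiv:1001.5069 — 7 statements merged into one kernel-verified Lean document; each statement's English description precedes it below -/
import Mathlib

section
/- Let G be a group, A a finite subset of G, and K ≥ 1 a real number. If |A·A| ≤ K|A|, then |A·A⁻¹| ≤ K²|A|. -/
open Pointwise

theorem stmt_1 {G : Type*} [Group G] [DecidableEq G]
    (A : Finset G) (K : ℝ) (hK : 1 ≤ K)
    (h : ((A * A).card : ℝ) ≤ K * A.card) :
    ((A * A⁻¹).card : ℝ) ≤ K ^ 2 * A.card := by
  rcases A.eq_empty_or_nonempty with rfl | hA
  · simp
  have key := Finset.ruzsa_triangle_inequality_mulInv_mul_mul A A A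
  have hApos : (0 : ℝ) < A.card := by exact_mod_cast hA.card_pos
  have key' : ((A * A⁻¹).card : ℝ) * A.card ≤ ((A * A).card : ℝ) * (A * A).card := by
    exact_mod_cast key
  have h2 : ((A * A).card : ℝ) * (A * A).card ≤ (K * A.card) * (K * A.card) :=
    mul_le_mul h h (Nat.cast_nonneg _) (by positivity)
  nlinarith [key', h2]
end

section
/- Let G be a group and A a finite subset containing 1 with A = A⁻¹. If |A·A·A| ≤ K|A| for some real K ≥ 1, then for every integer n ≥ 3, |Aⁿ| ≤ K^{n-2}|A|, where Aⁿ denotes the n-fold product set. -/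
open Pointwise

theorem stmt_4 {G : Type*} [Group G] [DecidableEq G]
    (A : Finset G) (hone : (1 : G) ∈ A) (hsymm : A = A⁻¹)
    (K : ℝ) (hK : 1 ≤ K)
    (h : ((A * A * A).card : ℝ) ≤ K * A.card)
    (n : ℕ) (hn : 3 ≤ n) :
    ((A ^ n).card : ℝ) ≤ K ^ (n - 2) * A.card := by
  exact Finset.small_pow_of_small_tripling hn (by rwa [pow_succ, pow_two]) hsymm.symm
end

section
/- Let G be a finite group of order N, let M be the minimal dimension of a nontrivial real irreducible representation of G, and let X, Y be probability densities on G. Then ‖X∗Y − U‖ ≤ √(N/M) · ‖X − U‖ · ‖Y − U‖, where U is the uniform density and ∗ is convolution. -/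
open CategoryTheory

/-- The ℓ² norm of a real-valued function on a finite group. -/
noncomputable def l2Norm {G : Type*} [Fintype G] (f : G → ℝ) : ℝ :=
  Real.sqrt (∑ g, (f g) ^ 2)

/-- Convolution of two real-valued functions on a group. -/
noncomputable def conv {G : Type*} [Group G] [Fintype G] (X Y : G → ℝ) : G → ℝ :=
  fun g => ∑ h, X h * Y (h⁻¹ * g)

namespace Stmt10Aux

open Module Matrix

variable {G : Type} [Group G] [Fintype G]

/-- The right regular representation on `EuclideanSpace ℝ G`. -/
def rrep : Representation ℝ G (EuclideanSpace ℝ G) where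
  toFun g :=
    { toFun := fun v => WithLp.toLp 2 (fun x => v (x * g))
      map_add' := fun _ _ => rfl
      map_smul' := fun _ _ => rfl }
  map_one' := by ext v x; show v (x * 1) = v x; rw [mul_one]
  map_mul' g h := by ext v x; show v (x * (g * h)) = v (x * g * h); rw [mul_assoc]

lemma rrep_apply (g : G) (v : EuclideanSpace ℝ G) (x : G) : rrep g v x = v (x * g) := rfl

/-- Restriction of a representation to an invariant subspace. -/
def subRep {W : Type} [AddCommGroup W] [Module ℝ W] (ρ : Representation ℝ G W)
    (p : Submodule ℝ W) (hp : ∀ g, ∀ v ∈ p, ρ g v ∈ p) : Representation ℝ G p where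
  toFun g := (ρ g).restrict (fun v hv => hp g v hv)
  map_one' := by ext v; simp [LinearMap.restrict_apply]
  map_mul' g h := by ext v; simp [LinearMap.restrict_apply]

lemma subRep_apply {W : Type} [AddCommGroup W] [Module ℝ W] (ρ : Representation ℝ G W)
    (p : Submodule ℝ W) (hp : ∀ g, ∀ v ∈ p, ρ g v ∈ p) (g : G) (v : p) :
    (subRep ρ p hp g v : W) = ρ g v := rfl

/-- A nonzero invariant subspace with no invariant vectors has dimension at least `M`. -/
lemma finrank_ge_of_invariant {M : ℕ}
    (hM_le : ∀ V : FDRep ℝ G, Simple V → (∃ g : G, V.ρ g ≠ 1) → M ≤ Module.finrank ℝ V)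
    (E : Submodule ℝ (EuclideanSpace ℝ G)) (hE : E ≠ ⊥)
    (hinv : ∀ g, ∀ v ∈ E, rrep g v ∈ E)
    (hnoconst : ∀ v ∈ E, (∀ g, rrep g v = v) → v = 0) :
    M ≤ Module.finrank ℝ E := by
  classical
  have hSne : ∃ d : ℕ, ∃ p : Submodule ℝ (EuclideanSpace ℝ G),
      (p ≤ E ∧ p ≠ ⊥ ∧ ∀ g, ∀ v ∈ p, rrep g v ∈ p) ∧ Module.finrank ℝ p = d :=
    ⟨_, E, ⟨le_rfl, hE, hinv⟩, rfl⟩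
  obtain ⟨p, ⟨hpE, hpbot, hpinv⟩, hpd⟩ := Nat.find_spec hSne
  have hmin : ∀ q : Submodule ℝ (EuclideanSpace ℝ G),
      (q ≤ E ∧ q ≠ ⊥ ∧ ∀ g, ∀ v ∈ q, rrep g v ∈ q) → Nat.find hSne ≤ Module.finrank ℝ q :=
    fun q hq => Nat.find_min' hSne ⟨q, hq, rfl⟩
  set ρp := subRep rrep p hpinv with hρp
  set V : FDRep ℝ G := FDRep.of ρp with hV
  have hsimple : Simple V := by
    constructor
    intro Z h hmono
    let φ : (↑Z.V) →ₗ[ℝ] ↥p := h.hom.hom.hom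
    have hφ : ∀ z, (φ z : ↥p) = h.hom z := fun _ => rfl
    have hcomm : ∀ (g : G) (z : ↑Z.V), φ (Z.ρ g z) = ρp g (φ z) := by
      intro g z
      exact congrArg (fun k => k.hom.hom z) (h.comm g)
    constructor
    · intro hiso h0
      obtain ⟨v, hvp, hvne⟩ := (Submodule.ne_bot_iff p).mp hpbot
      have hh : h.hom = 0 := by rw [h0]; rfl
      have h1 : (CategoryTheory.inv h).hom ≫ h.hom = 𝟙 V.V := by
        rw [← Action.comp_hom, IsIso.inv_hom_id, Action.id_hom]
      rw [hh, Limits.comp_zero] at h1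
      have h2 : (0 : ↥p) = ⟨v, hvp⟩ := by exact congrArg (fun k : V.V ⟶ V.V => k.hom.hom ⟨v, hvp⟩) h1
      exact hvne (by simpa using congrArg Subtype.val h2.symm)
    · intro hne
      have hker : LinearMap.ker φ = ⊥ := by
        set K := LinearMap.ker φ with hK
        have hKinv : ∀ g, ∀ z ∈ K, Z.ρ g z ∈ K := by
          intro g z hz
          have hz0 : φ z = 0 := hz
          have h1 : φ (Z.ρ g z) = 0 := by rw [hcomm g z, hz0, map_zero]
          exact h1
        set ZK : FDRep ℝ G := FDRep.of (subRep (FDRep.ρ Z) K hKinv) with hZK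
        let ι : ZK ⟶ Z := { hom := FGModuleCat.ofHom K.subtype, comm := fun g => rfl }
        have hcomp : ι ≫ h = (0 : ZK ⟶ Z) ≫ h := by
          rw [Limits.zero_comp]
          apply Action.hom_ext
          rw [Action.comp_hom, Action.zero_hom]
          apply FGModuleCat.hom_ext
          apply LinearMap.ext
          rintro ⟨z, hz⟩
          exact hz
        have hι0 : ι = 0 := hmono.right_cancellation _ _ hcomp
        rw [Submodule.eq_bot_iff]
        intro z hz
        have h6 : ι.hom = (0 : ZK ⟶ Z).hom := congrArg Action.Hom.hom hι0
        rw [Action.zero_hom] at h6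
        exact congrArg (fun k => k.hom.hom ⟨z, hz⟩) h6
      have hsurj : LinearMap.range φ = ⊤ := by
        set R := LinearMap.range φ with hR
        set q := R.map p.subtype with hq
        have hqp : q ≤ p := by
          rintro v ⟨w, _, rfl⟩
          exact w.2
        have hqinv : ∀ g, ∀ v ∈ q, rrep g v ∈ q := by
          rintro g v ⟨w, hw, rfl⟩
          obtain ⟨z, rfl⟩ := hw
          refine ⟨φ (Z.ρ g z), ⟨Z.ρ g z, rfl⟩, ?_⟩
          rw [hcomm g z]
          rfl
        have hqbot : q ≠ ⊥ := by
          have hh0 : φ ≠ 0 := by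
            intro hz
            apply hne
            apply Action.hom_ext
            rw [Action.zero_hom]
            apply FGModuleCat.hom_ext
            exact hz
          obtain ⟨z, hz⟩ := DFunLike.ne_iff.mp hh0
          intro hbot
          apply hz
          have hmem : ((φ z : ↥p) : EuclideanSpace ℝ G) ∈ q := ⟨φ z, ⟨z, rfl⟩, rfl⟩
          rw [hbot, Submodule.mem_bot] at hmem
          exact Subtype.ext (by simpa using hmem)
        have h1 := hmin q ⟨le_trans hqp hpE, hqbot, hqinv⟩
        have h2 : q = p := Submodule.eq_of_le_of_finrank_le hqp (by rw [hpd]; exact h1)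
        apply Submodule.map_injective_of_injective p.injective_subtype
        rw [Submodule.map_subtype_top]
        exact h2
      have hbij : Function.Bijective φ :=
        ⟨LinearMap.ker_eq_bot.mp hker, LinearMap.range_eq_top.mp hsurj⟩
      set e := LinearEquiv.ofBijective φ hbij with he
      refine ⟨⟨Action.Hom.mk ?_ ?_, ?_, ?_⟩⟩
      · exact FGModuleCat.ofHom e.symm.toLinearMap
      · intro g
        apply FGModuleCat.hom_ext
        apply LinearMap.ext
        intro w
        show e.symm (ρp g w) = Z.ρ g (e.symm w)
        obtain ⟨z, rfl⟩ := e.surjective w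
        have h1 : (e z : ↥p) = φ z := rfl
        rw [e.symm_apply_apply, h1, ← hcomm g z]
        have h2 : (e (Z.ρ g z) : ↥p) = φ (Z.ρ g z) := rfl
        rw [← h2, e.symm_apply_apply]
      · apply Action.hom_ext
        apply FGModuleCat.hom_ext
        apply LinearMap.ext
        intro z
        show e.symm (φ z) = z
        exact e.symm_apply_apply z
      · apply Action.hom_ext
        apply FGModuleCat.hom_ext
        apply LinearMap.ext
        intro w
        show φ (e.symm w) = w
        exact e.apply_symm_apply w
  have hnt : ∃ g : G, V.ρ g ≠ 1 := by
    by_contra hc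
    push_neg at hc
    apply hpbot
    rw [Submodule.eq_bot_iff]
    intro v hv
    refine hnoconst v (hpE hv) (fun g => ?_)
    have h1 := congrArg (fun f : ↥p →ₗ[ℝ] ↥p => (f (⟨v, hv⟩ : ↥p) : EuclideanSpace ℝ G)) (hc g)
    simp at h1
    exact h1
  have hle := hM_le V hsimple hnt
  calc M ≤ Module.finrank ℝ V := hle
  _ = Module.finrank ℝ p := rfl
  _ ≤ Module.finrank ℝ E := Submodule.finrank_mono hpE

lemma dotProduct_eq_inner (x y : EuclideanSpace ℝ G) :
    dotProduct (x : G → ℝ) (y : G → ℝ) = inner (𝕜 := ℝ) x y := by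
  simp [dotProduct, PiLp.inner_apply, RCLike.inner_apply, mul_comm]

lemma key [DecidableEq G] {M : ℕ} (hMpos : 0 < M)
    (hM_le : ∀ V : FDRep ℝ G, Simple V → (∃ g : G, V.ρ g ≠ 1) → M ≤ Module.finrank ℝ V)
    (f g : G → ℝ) (hf : ∑ x, f x = 0) :
    ∑ x, (∑ y, f (x * y⁻¹) * g y) ^ 2 ≤
      ((Fintype.card G : ℝ) / M) * (∑ x, f x ^ 2) * (∑ x, g x ^ 2) := by
  classical
  set A : Matrix G G ℝ := Matrix.of (fun x y : G => f (x * y⁻¹)) with hA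
  set B : Matrix G G ℝ := Aᵀ * A with hB
  have hAH : Aᴴ = Aᵀ := conjTranspose_eq_transpose_of_trivial A
  have hBH : B.IsHermitian := by
    rw [hB, ← hAH]; exact isHermitian_conjTranspose_mul_self A
  have hBpsd : B.PosSemidef := by
    rw [hB, ← hAH]; exact posSemidef_conjTranspose_mul_self A
  -- the largest eigenvalue
  obtain ⟨i0, -, hi0⟩ := Finset.exists_max_image Finset.univ hBH.eigenvalues ⟨1, Finset.mem_univ 1⟩
  set lam := hBH.eigenvalues i0 with hlam
  have hlam0 : 0 ≤ lam := hBpsd.eigenvalues_nonneg i0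
  -- Rayleigh quotient bound
  have hray : ∀ v : G → ℝ, v ⬝ᵥ (B *ᵥ v) ≤ lam * (v ⬝ᵥ v) := by
    intro v
    set Umat : Matrix G G ℝ := (hBH.eigenvectorUnitary : Matrix G G ℝ) with hU
    have hUU : Umat * star Umat = 1 := (Matrix.mem_unitaryGroup_iff).mp hBH.eigenvectorUnitary.2
    have hstar : star Umat = Umatᵀ := by
      rw [Matrix.star_eq_conjTranspose, conjTranspose_eq_transpose_of_trivial]
    set w : G → ℝ := Umatᵀ *ᵥ v with hw
    have hdiag : Matrix.diagonal (RCLike.ofReal ∘ hBH.eigenvalues) = Matrix.diagonal hBH.eigenvalues := rfl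
    have h1 : v ⬝ᵥ (B *ᵥ v) = ∑ i, hBH.eigenvalues i * w i ^ 2 := by
      calc v ⬝ᵥ (B *ᵥ v)
          = v ⬝ᵥ ((Umat * Matrix.diagonal hBH.eigenvalues * star Umat) *ᵥ v) := by
            rw [← hdiag]; conv_lhs => rw [hBH.spectral_theorem, Unitary.conjStarAlgAut_apply]
        _ = v ⬝ᵥ (Umat *ᵥ (Matrix.diagonal hBH.eigenvalues *ᵥ (Umatᵀ *ᵥ v))) := by
            rw [hstar, ← Matrix.mulVec_mulVec, ← Matrix.mulVec_mulVec]
        _ = (v ᵥ* Umat) ⬝ᵥ (Matrix.diagonal hBH.eigenvalues *ᵥ w) := by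
            rw [Matrix.dotProduct_mulVec, hw]
        _ = w ⬝ᵥ (Matrix.diagonal hBH.eigenvalues *ᵥ w) := by
            rw [hw, Matrix.mulVec_transpose]
        _ = ∑ i, hBH.eigenvalues i * w i ^ 2 := by
            simp only [dotProduct, Matrix.mulVec_diagonal]
            refine Finset.sum_congr rfl (fun i _ => by ring)
    have h2 : v ⬝ᵥ v = ∑ i, w i ^ 2 := by
      have : w ⬝ᵥ w = v ⬝ᵥ v := by
        calc w ⬝ᵥ w = (w ᵥ* Umatᵀ) ⬝ᵥ v := by rw [hw, Matrix.dotProduct_mulVec]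
          _ = (Umat *ᵥ (Umatᵀ *ᵥ v)) ⬝ᵥ v := by rw [Matrix.vecMul_transpose, hw]
          _ = ((Umat * Umatᵀ) *ᵥ v) ⬝ᵥ v := by rw [Matrix.mulVec_mulVec]
          _ = v ⬝ᵥ v := by rw [← hstar, hUU, Matrix.one_mulVec]
      rw [← this]
      simp only [dotProduct]
      exact Finset.sum_congr rfl (fun i _ => (sq (w i)).symm)
    rw [h1, h2, Finset.mul_sum]
    refine Finset.sum_le_sum (fun i _ => ?_)
    exact mul_le_mul_of_nonneg_right (hi0 i (Finset.mem_univ i)) (sq_nonneg _)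
  -- the left-hand side as a quadratic form
  have hLHS : ∑ x, (∑ y, f (x * y⁻¹) * g y) ^ 2 = g ⬝ᵥ (B *ᵥ g) := by
    have h1 : ∀ x, (∑ y, f (x * y⁻¹) * g y) = (A *ᵥ g) x := fun x => rfl
    calc ∑ x, (∑ y, f (x * y⁻¹) * g y) ^ 2 = (A *ᵥ g) ⬝ᵥ (A *ᵥ g) := by
          simp only [dotProduct, h1]
          exact Finset.sum_congr rfl (fun x _ => sq ((A *ᵥ g) x))
      _ = (g ᵥ* Aᵀ) ⬝ᵥ (A *ᵥ g) := by rw [Matrix.vecMul_transpose]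
      _ = g ⬝ᵥ (Aᵀ *ᵥ (A *ᵥ g)) := (Matrix.dotProduct_mulVec g Aᵀ (A *ᵥ g)).symm
      _ = g ⬝ᵥ (B *ᵥ g) := by rw [hB, Matrix.mulVec_mulVec]
  -- the trace of B
  have htr : B.trace = (Fintype.card G : ℝ) * ∑ x, f x ^ 2 := by
    have h1 : ∀ y : G, ∑ x, f (x * y⁻¹) ^ 2 = ∑ x, f x ^ 2 :=
      fun y => Equiv.sum_comp (Equiv.mulRight y⁻¹) (fun z => f z ^ 2)
    calc B.trace = ∑ y, ∑ x, f (x * y⁻¹) ^ 2 := by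
          simp only [hB, Matrix.trace, Matrix.diag, Matrix.mul_apply, Matrix.transpose_apply]
          refine Finset.sum_congr rfl (fun y _ => Finset.sum_congr rfl (fun x _ => ?_))
          simp [hA, sq]
      _ = ∑ _y : G, ∑ x, f x ^ 2 := Finset.sum_congr rfl (fun y _ => h1 y)
      _ = (Fintype.card G : ℝ) * ∑ x, f x ^ 2 := by
          rw [Finset.sum_const, Finset.card_univ, nsmul_eq_mul]
  have hgg : g ⬝ᵥ g = ∑ x, g x ^ 2 := by
    simp only [dotProduct]
    exact Finset.sum_congr rfl (fun x _ => (sq (g x)).symm)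
  have hLHS0 : 0 ≤ ∑ x, (∑ y, f (x * y⁻¹) * g y) ^ 2 :=
    Finset.sum_nonneg (fun x _ => sq_nonneg _)
  have hRHS0 : 0 ≤ ((Fintype.card G : ℝ) / M) * (∑ x, f x ^ 2) * (∑ x, g x ^ 2) := by
    have := Finset.sum_nonneg (fun x (_ : x ∈ Finset.univ) => sq_nonneg (f x))
    have := Finset.sum_nonneg (fun x (_ : x ∈ Finset.univ) => sq_nonneg (g x))
    positivity
  rcases eq_or_lt_of_le hlam0 with hlamz | hlampos
  · -- top eigenvalue zero: LHS is zero
    have h1 : g ⬝ᵥ (B *ᵥ g) ≤ 0 := by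
      have := hray g
      rw [← hlamz] at this
      simpa using this
    calc ∑ x, (∑ y, f (x * y⁻¹) * g y) ^ 2 ≤ 0 := hLHS ▸ h1
      _ ≤ _ := hRHS0
  · -- top eigenvalue positive: use the eigenspace
    set E : Submodule ℝ (EuclideanSpace ℝ G) :=
      { carrier := {v : EuclideanSpace ℝ G | B *ᵥ (v : G → ℝ) = lam • (v : G → ℝ)}
        add_mem' := by
          intro a b ha hb
          simp only [Set.mem_setOf_eq] at *
          show B *ᵥ ((a : G → ℝ) + b) = lam • ((a : G → ℝ) + b)
          rw [Matrix.mulVec_add, ha, hb, smul_add]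
        zero_mem' := by
          show B *ᵥ (0 : G → ℝ) = lam • (0 : G → ℝ)
          rw [Matrix.mulVec_zero, smul_zero]
        smul_mem' := by
          intro c a ha
          simp only [Set.mem_setOf_eq] at *
          show B *ᵥ (c • (a : G → ℝ)) = lam • (c • (a : G → ℝ))
          rw [Matrix.mulVec_smul, ha, smul_comm] } with hE
    have hEmem : ∀ v : EuclideanSpace ℝ G, v ∈ E ↔ B *ᵥ (v : G → ℝ) = lam • (v : G → ℝ) :=
      fun v => Iff.rfl
    -- commutation of A with the right regular representation
    have commA : ∀ (s : G) (v : G → ℝ),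
        A *ᵥ (fun x => v (x * s)) = fun x => (A *ᵥ v) (x * s) := by
      intro s v
      funext x
      show ∑ y, f (x * y⁻¹) * v (y * s) = ∑ z, f ((x * s) * z⁻¹) * v z
      rw [← Equiv.sum_comp (Equiv.mulRight s) (fun z => f ((x * s) * z⁻¹) * v z)]
      refine Finset.sum_congr rfl (fun y _ => ?_)
      have : (x * s) * ((y * s)⁻¹) = x * y⁻¹ := by group
      simp only [Equiv.coe_mulRight, this]
    have commAT : ∀ (s : G) (v : G → ℝ),
        Aᵀ *ᵥ (fun x => v (x * s)) = fun x => (Aᵀ *ᵥ v) (x * s) := by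
      intro s v
      funext x
      show ∑ y, f (y * x⁻¹) * v (y * s) = ∑ z, f (z * (x * s)⁻¹) * v z
      rw [← Equiv.sum_comp (Equiv.mulRight s) (fun z => f (z * (x * s)⁻¹) * v z)]
      refine Finset.sum_congr rfl (fun y _ => ?_)
      have : (y * s) * ((x * s)⁻¹) = y * x⁻¹ := by group
      simp only [Equiv.coe_mulRight, this]
    have hEinv : ∀ s, ∀ v ∈ E, rrep s v ∈ E := by
      intro s v hv
      rw [hEmem] at hv ⊢
      have h1 : (rrep s v : G → ℝ) = fun x => v (x * s) := rfl
      rw [h1]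
      calc B *ᵥ (fun x => v (x * s))
          = Aᵀ *ᵥ (A *ᵥ (fun x => v (x * s))) := by rw [hB, Matrix.mulVec_mulVec]
        _ = Aᵀ *ᵥ (fun x => (A *ᵥ (v : G → ℝ)) (x * s)) := by rw [commA]
        _ = fun x => (Aᵀ *ᵥ (A *ᵥ (v : G → ℝ))) (x * s) := by rw [commAT]
        _ = fun x => (B *ᵥ (v : G → ℝ)) (x * s) := by rw [hB, Matrix.mulVec_mulVec]
        _ = fun x => (lam • (v : G → ℝ)) (x * s) := by rw [hv]
        _ = lam • (fun x => v (x * s)) := rfl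
    have hEbot : E ≠ ⊥ := by
      intro hbot
      have hmem : (hBH.eigenvectorBasis i0 : EuclideanSpace ℝ G) ∈ E := by
        rw [hEmem]
        exact hBH.mulVec_eigenvectorBasis i0
      rw [hbot, Submodule.mem_bot] at hmem
      exact hBH.eigenvectorBasis.orthonormal.ne_zero i0 hmem
    have hnoconst : ∀ v ∈ E, (∀ s, rrep s v = v) → v = 0 := by
      intro v hv hconst
      have hvconst : ∀ y, v y = v 1 := by
        intro y
        have h1 : rrep y v 1 = v 1 :=
          congrFun (congrArg (fun u : EuclideanSpace ℝ G => (u : G → ℝ)) (hconst y)) 1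
        rw [rrep_apply, one_mul] at h1
        exact h1
      have hsum1 : ∀ x : G, ∑ y, f (x * y⁻¹) = 0 := by
        intro x
        have h4 : ∑ y : G, f (x * y⁻¹) = ∑ z : G, f z :=
          Fintype.sum_equiv ((Equiv.inv G).trans (Equiv.mulLeft x))
            (fun y => f (x * y⁻¹)) f (fun y => rfl)
        rw [h4]
        exact hf
      have hAv : A *ᵥ (v : G → ℝ) = 0 := by
        funext x
        show ∑ y, f (x * y⁻¹) * v y = 0
        calc ∑ y, f (x * y⁻¹) * v y = ∑ y, f (x * y⁻¹) * v 1 :=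
              Finset.sum_congr rfl (fun y _ => by rw [hvconst y])
          _ = (∑ y, f (x * y⁻¹)) * v 1 := by rw [Finset.sum_mul]
          _ = 0 := by rw [hsum1 x, zero_mul]
      have h2 : lam • (v : G → ℝ) = 0 := by
        rw [hEmem] at hv
        rw [← hv, hB, ← Matrix.mulVec_mulVec, hAv, Matrix.mulVec_zero]
      have h3 := smul_eq_zero.mp h2
      rcases h3 with h3 | h3
      · exact absurd h3 (ne_of_gt hlampos)
      · simpa using h3
    have hMd : M ≤ Module.finrank ℝ E := finrank_ge_of_invariant hM_le E hEbot hEinv hnoconst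
    -- orthonormal vectors in the eigenspace
    set obb := stdOrthonormalBasis ℝ ↥E with hobb
    set vv : Fin M → EuclideanSpace ℝ G :=
      fun j => (obb (Fin.castLE hMd j) : EuclideanSpace ℝ G) with hvv
    have hvE : ∀ j, vv j ∈ E := fun j => (obb (Fin.castLE hMd j)).2
    have hvon : ∀ j k, (vv j : G → ℝ) ⬝ᵥ (vv k : G → ℝ) = if j = k then 1 else 0 := by
      intro j k
      have h1 := orthonormal_iff_ite.mp obb.orthonormal (Fin.castLE hMd j) (Fin.castLE hMd k)
      have h2 : inner (𝕜 := ℝ) (vv j) (vv k) =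
          inner (𝕜 := ℝ) (obb (Fin.castLE hMd j)) (obb (Fin.castLE hMd k)) := rfl
      rw [dotProduct_eq_inner, h2, h1]
      simp [Fin.castLE_inj]
    -- trace lower bound via the projection onto the span
    have htrlow : lam * M ≤ B.trace := by
      have hvmv : ∀ a b c d : G → ℝ,
          Matrix.vecMulVec a b * Matrix.vecMulVec c d =
            (b ⬝ᵥ c) • Matrix.vecMulVec a d := by
        intro a b c d
        ext x y
        simp only [Matrix.mul_apply, Matrix.vecMulVec_apply, Matrix.smul_apply,
          dotProduct, smul_eq_mul, Finset.sum_mul]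
        refine Finset.sum_congr rfl (fun z _ => by ring)
      set P : Matrix G G ℝ := ∑ j : Fin M, Matrix.vecMulVec (vv j) (vv j) with hP
      have hPP : P * P = P := by
        rw [hP, Finset.sum_mul_sum]
        calc ∑ j : Fin M, ∑ k : Fin M,
              Matrix.vecMulVec (vv j) (vv j) * Matrix.vecMulVec (vv k) (vv k)
            = ∑ j : Fin M, ∑ k : Fin M,
              ((if j = k then (1:ℝ) else 0) • Matrix.vecMulVec (vv j : G → ℝ) (vv k)) := by
              refine Finset.sum_congr rfl fun j _ => Finset.sum_congr rfl fun k _ => ?_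
              rw [hvmv, hvon]
          _ = ∑ j : Fin M, Matrix.vecMulVec (vv j) (vv j) := by
              refine Finset.sum_congr rfl fun j _ => ?_
              rw [Finset.sum_eq_single j]
              · simp
              · intro k _ hk
                simp [Ne.symm hk]
              · intro hj
                exact absurd (Finset.mem_univ j) hj
      have hPsymm : Pᴴ = P := by
        rw [conjTranspose_eq_transpose_of_trivial, hP, Matrix.transpose_sum]
        refine Finset.sum_congr rfl fun j _ => ?_
        ext x y
        simp [Matrix.transpose_apply, Matrix.vecMulVec_apply, mul_comm]
      set Q : Matrix G G ℝ := 1 - P with hQ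
      have hQsymm : Qᴴ = Q := by
        rw [hQ, Matrix.conjTranspose_sub, hPsymm, Matrix.conjTranspose_one]
      have hpsd : (Q * B * Qᴴ).PosSemidef := hBpsd.mul_mul_conjTranspose_same Q
      have htr0 : 0 ≤ (Q * B * Qᴴ).trace := by
        rw [Matrix.trace]
        refine Finset.sum_nonneg (fun i _ => ?_)
        exact hpsd.diag_nonneg
      have htre : (Q * B * Qᴴ).trace = B.trace - (P * B).trace := by
        calc (Q * B * Qᴴ).trace = (Q * B * Q).trace := by rw [hQsymm]
          _ = ((Q * Q) * B).trace := by
              rw [Matrix.trace_mul_cycle]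
          _ = (Q * B).trace := by
              have : Q * Q = Q := by
                rw [hQ]
                rw [Matrix.sub_mul, Matrix.mul_sub, Matrix.mul_sub, hPP]
                simp only [Matrix.one_mul, Matrix.mul_one]
                abel
              rw [this]
          _ = B.trace - (P * B).trace := by
              rw [hQ, Matrix.sub_mul, Matrix.one_mul, Matrix.trace_sub]
      have htrP : (P * B).trace = lam * M := by
        have h1 : ∀ j : Fin M, (Matrix.vecMulVec (vv j : G → ℝ) (vv j) * B).trace
            = (vv j : G → ℝ) ⬝ᵥ (B *ᵥ (vv j : G → ℝ)) := by
          intro j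
          simp only [Matrix.trace, Matrix.diag, Matrix.mul_apply, Matrix.vecMulVec_apply,
            dotProduct, Matrix.mulVec, Finset.mul_sum]
          rw [Finset.sum_comm]
          refine Finset.sum_congr rfl fun z _ => Finset.sum_congr rfl fun x _ => by ring
        calc (P * B).trace = ∑ j : Fin M, (Matrix.vecMulVec (vv j : G → ℝ) (vv j) * B).trace := by
              rw [hP, Finset.sum_mul, Matrix.trace_sum]
          _ = ∑ j : Fin M, lam := by
              refine Finset.sum_congr rfl fun j _ => ?_
              have h6 : B *ᵥ (vv j : G → ℝ) = lam • (vv j : G → ℝ) := hvE j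
              have h7 := hvon j j
              rw [if_pos rfl] at h7
              rw [h1 j, h6, dotProduct_smul, smul_eq_mul, h7, mul_one]
          _ = lam * M := by
              rw [Finset.sum_const, Finset.card_univ, Fintype.card_fin, nsmul_eq_mul, mul_comm]
      rw [htre, htrP] at htr0
      linarith
    -- finish
    have h2 : lam ≤ B.trace / M := by
      rw [le_div_iff₀ (by exact_mod_cast hMpos)]
      exact htrlow
    have hggnn : 0 ≤ g ⬝ᵥ g := by
      rw [hgg]
      exact Finset.sum_nonneg (fun x _ => sq_nonneg _)
    calc ∑ x, (∑ y, f (x * y⁻¹) * g y) ^ 2 = g ⬝ᵥ (B *ᵥ g) := hLHS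
      _ ≤ lam * (g ⬝ᵥ g) := hray g
      _ ≤ (B.trace / M) * (g ⬝ᵥ g) := mul_le_mul_of_nonneg_right h2 hggnn
      _ = ((Fintype.card G : ℝ) / M) * (∑ x, f x ^ 2) * (∑ x, g x ^ 2) := by
          rw [htr, hgg]
          ring

end Stmt10Aux

theorem stmt_10 {G : Type} [Group G] [Fintype G]
    (N : ℕ) (hN : N = Fintype.card G)
    (M : ℕ)
    (hM_le : ∀ V : FDRep ℝ G, Simple V → (∃ g : G, V.ρ g ≠ 1) → M ≤ Module.finrank ℝ V)
    (hM_mem : ∃ V : FDRep ℝ G, Simple V ∧ (∃ g : G, V.ρ g ≠ 1) ∧ Module.finrank ℝ V = M)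
    (X Y : G → ℝ) (hX0 : ∀ g, 0 ≤ X g) (hX1 : ∑ g, X g = 1)
    (hY0 : ∀ g, 0 ≤ Y g) (hY1 : ∑ g, Y g = 1)
    (U : G → ℝ) (hU : ∀ g, U g = 1 / N) :
    l2Norm (conv X Y - U) ≤
      Real.sqrt ((N : ℝ) / M) * l2Norm (X - U) * l2Norm (Y - U) := by
  classical
  have hG : Nonempty G := ⟨1⟩
  have hNpos : 0 < N := by rw [hN]; exact Fintype.card_pos
  have hNne : (N : ℝ) ≠ 0 := Nat.cast_ne_zero.mpr hNpos.ne'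
  have hMpos : 0 < M := by
    rcases Nat.eq_zero_or_pos M with h | h
    · exfalso
      obtain ⟨V, hVs, ⟨g0, hg0⟩, hVfin⟩ := hM_mem
      rw [h] at hVfin
      have hsub : Subsingleton V := Module.finrank_zero_iff.mp hVfin
      exact hg0 (LinearMap.ext fun v => Subsingleton.elim _ _)
    · exact h
  set f : G → ℝ := X - U with hfdef
  set g : G → ℝ := Y - U with hgdef
  have hfx : ∀ x, f x = X x - U x := fun x => rfl
  have hgx : ∀ x, g x = Y x - U x := fun x => rfl
  have hUsum : ∑ x : G, U x = 1 := by
    simp only [hU]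
    rw [Finset.sum_const, Finset.card_univ, ← hN, nsmul_eq_mul]
    field_simp
  have hfsum : ∑ x, f x = 0 := by
    simp only [hfx]
    rw [Finset.sum_sub_distrib, hX1, hUsum, sub_self]
  have hconv : ∀ x, (conv X Y - U) x = ∑ y, f (x * y⁻¹) * g y := by
    intro x
    have hreindex : ∀ F : G → ℝ, ∑ y : G, F (x * y⁻¹) = ∑ z : G, F z := fun F =>
      Fintype.sum_equiv ((Equiv.inv G).trans (Equiv.mulLeft x))
        (fun y => F (x * y⁻¹)) F (fun y => rfl)
    have S1 : ∑ y, X (x * y⁻¹) * Y y = conv X Y x := by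
      refine Fintype.sum_equiv ((Equiv.inv G).trans (Equiv.mulLeft x))
        (fun y => X (x * y⁻¹) * Y y) (fun h => X h * Y (h⁻¹ * x)) (fun y => ?_)
      show X (x * y⁻¹) * Y y = X (x * y⁻¹) * Y ((x * y⁻¹)⁻¹ * x)
      have h2 : (x * y⁻¹)⁻¹ * x = y := by group
      rw [h2]
    have S2 : ∑ y, X (x * y⁻¹) * U y = 1 / N := by
      simp only [hU]
      rw [← Finset.sum_mul, hreindex X, hX1, one_mul]
    have S3 : ∑ y, U (x * y⁻¹) * Y y = 1 / N := by
      simp only [hU]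
      rw [← Finset.mul_sum, hY1, mul_one]
    have S4 : ∑ y : G, U (x * y⁻¹) * U y = 1 / N := by
      simp only [hU]
      rw [Finset.sum_const, Finset.card_univ, ← hN, nsmul_eq_mul]
      field_simp
    have expand : ∑ y, f (x * y⁻¹) * g y =
        (∑ y, X (x * y⁻¹) * Y y) - (∑ y, X (x * y⁻¹) * U y)
          - (∑ y, U (x * y⁻¹) * Y y) + (∑ y : G, U (x * y⁻¹) * U y) := by
      have h0 : ∀ y : G, f (x * y⁻¹) * g y =
          X (x * y⁻¹) * Y y - X (x * y⁻¹) * U y - U (x * y⁻¹) * Y y + U (x * y⁻¹) * U y := by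
        intro y
        rw [hfx, hgx]
        ring
      rw [Finset.sum_congr rfl (fun y _ => h0 y), Finset.sum_add_distrib,
        Finset.sum_sub_distrib, Finset.sum_sub_distrib]
    rw [expand, S1, S2, S3, S4]
    have : (conv X Y - U) x = conv X Y x - U x := rfl
    rw [this, hU]
    ring
  have hkey := Stmt10Aux.key (G := G) hMpos hM_le f g hfsum
  rw [← hN] at hkey
  have hsq : ∑ x, ((conv X Y - U) x) ^ 2 = ∑ x, (∑ y, f (x * y⁻¹) * g y) ^ 2 :=
    Finset.sum_congr rfl (fun x _ => by rw [hconv x])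
  show Real.sqrt (∑ x, ((conv X Y - U) x) ^ 2) ≤ _
  rw [hsq]
  have hf2 : (0 : ℝ) ≤ ∑ x, f x ^ 2 := Finset.sum_nonneg (fun x _ => sq_nonneg _)
  have hNM : (0 : ℝ) ≤ (N : ℝ) / M := by positivity
  calc Real.sqrt (∑ x, (∑ y, f (x * y⁻¹) * g y) ^ 2)
      ≤ Real.sqrt (((N : ℝ) / M) * (∑ x, f x ^ 2) * (∑ x, g x ^ 2)) := Real.sqrt_le_sqrt hkey
    _ = Real.sqrt ((N : ℝ) / M) * Real.sqrt (∑ x, f x ^ 2) * Real.sqrt (∑ x, g x ^ 2) := by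
        rw [Real.sqrt_mul (by positivity), Real.sqrt_mul hNM]
    _ = Real.sqrt ((N : ℝ) / M) * l2Norm f * l2Norm g := rfl
end

section
/- Let F be a finite field, G = SL₂(F), and A ⊆ G a generating set of G. Then A^{[3]}, the set of words of length at most 3 in A ∪ A⁻¹ ∪ {1}, contains at least |A|/4 elements of nonzero trace. -/
set_option linter.unreachableTactic false
set_option linter.unusedTactic false

open Pointwise

section Stmt14Aux

variable {F : Type*} [Field F]

local notation "SL2" => Matrix.SpecialLinearGroup (Fin 2) F
local notation "M2" => Matrix (Fin 2) (Fin 2) F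

lemma sl2_inv_coe (g : SL2) :
    ((g⁻¹ : SL2) : M2) = (Matrix.trace (g : M2)) • (1 : M2) - (g : M2) := by
  rw [Matrix.SpecialLinearGroup.coe_inv, Matrix.adjugate_fin_two]
  ext i j
  fin_cases i <;> fin_cases j <;>
    simp [Matrix.trace_fin_two, Matrix.one_fin_two] <;> ring

lemma top_of_all_mem (W : Submodule F M2) (hW : ∀ g : SL2, (g : M2) ∈ W) : W = ⊤ := by
  have hu : ((⟨!![1,1;0,1], by simp [Matrix.det_fin_two_of]⟩ : SL2) : M2) ∈ W := hW _
  have hl : ((⟨!![1,0;1,1], by simp [Matrix.det_fin_two_of]⟩ : SL2) : M2) ∈ W := hW _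
  have hul : ((⟨!![1,1;0,1], by simp [Matrix.det_fin_two_of]⟩ *
      ⟨!![1,0;1,1], by simp [Matrix.det_fin_two_of]⟩ : SL2) : M2) ∈ W := hW _
  erw [Matrix.SpecialLinearGroup.coe_mul] at hul
  have h1 : (1 : M2) ∈ W := by simpa using hW 1
  have hE01 : (!![0,1;0,0] : M2) ∈ W := by
    have := W.sub_mem hu h1
    convert this using 1
    ext i j; fin_cases i <;> fin_cases j <;> simp [Matrix.one_fin_two]
  have hE10 : (!![0,0;1,0] : M2) ∈ W := by
    have := W.sub_mem hl h1
    convert this using 1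
    ext i j; fin_cases i <;> fin_cases j <;> simp [Matrix.one_fin_two]
  have hE00 : (!![1,0;0,0] : M2) ∈ W := by
    have := W.sub_mem (W.sub_mem (W.sub_mem hul h1) hE01) hE10
    convert this using 1
    ext i j; fin_cases i <;> fin_cases j <;>
      simp [Matrix.one_fin_two, Matrix.mul_apply, Fin.sum_univ_two]
  have hE11 : (!![0,0;0,1] : M2) ∈ W := by
    have := W.sub_mem h1 hE00
    convert this using 1
    ext i j; fin_cases i <;> fin_cases j <;> simp [Matrix.one_fin_two]
  rw [eq_top_iff]
  intro m _
  have hm : m = m 0 0 • !![1,0;0,0] + m 0 1 • !![0,1;0,0] +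
      m 1 0 • !![0,0;1,0] + m 1 1 • !![0,0;0,1] := by
    ext i j; fin_cases i <;> fin_cases j <;> simp
  rw [hm]
  exact W.add_mem (W.add_mem (W.add_mem (W.smul_mem _ hE00) (W.smul_mem _ hE01))
    (W.smul_mem _ hE10)) (W.smul_mem _ hE11)


lemma exists_noncomm (s : Set SL2) (hgen : Subgroup.closure s = ⊤) :
    ∃ g ∈ s, ∃ h ∈ s, (g : M2) * (h : M2) ≠ (h : M2) * (g : M2) := by
  by_contra hc
  push_neg at hc
  have hcomm : ∀ g ∈ s, ∀ h ∈ s, g * h = h * g := by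
    intro g hg h hh
    have := hc g hg h hh
    ext i j
    rw [show ((g*h : SL2) : M2) = (g:M2)*(h:M2) from rfl] at *
    rw [show ((h*g : SL2) : M2) = (h:M2)*(g:M2) from rfl]
    rw [this]
  have hsub : s ⊆ Subgroup.centralizer s := by
    intro a ha
    show a ∈ Subgroup.centralizer s
    rw [Subgroup.mem_centralizer_iff]
    intro b hb
    exact hcomm b hb a ha
  have hcent : (⊤ : Subgroup SL2) ≤ Subgroup.centralizer s := by
    rw [← hgen]; exact (Subgroup.closure_le _).mpr hsub
  have hscenter : s ⊆ Subgroup.center SL2 := by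
    intro a ha
    show a ∈ Subgroup.center SL2
    rw [Subgroup.mem_center_iff]
    intro g
    exact ((Subgroup.mem_centralizer_iff.mp (hcent (Subgroup.mem_top g))) a ha).symm
  have hall : (⊤ : Subgroup SL2) ≤ Subgroup.center SL2 := by
    rw [← hgen]; exact (Subgroup.closure_le _).mpr hscenter
  -- unipotents don't commute
  set u : SL2 := ⟨!![1,1;0,1], by simp [Matrix.det_fin_two_of]⟩ with hu
  set l : SL2 := ⟨!![1,0;1,1], by simp [Matrix.det_fin_two_of]⟩ with hlv
  have hcul : u * l = l * u := by
    have := Subgroup.mem_center_iff.mp (hall (Subgroup.mem_top u))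
    exact (this l).symm
  have hmat : ((u*l : SL2) : M2) = ((l*u : SL2) : M2) := by rw [hcul]
  have h00 : ((u*l : SL2) : M2) 0 0 = ((l*u : SL2) : M2) 0 0 := by rw [hmat]
  have e1 : ((u*l : SL2) : M2) 0 0 = 1 + 1 := by
    show ((u:M2) * (l:M2)) 0 0 = 1 + 1
    rw [hu, hlv]
    simp [Matrix.mul_apply, Fin.sum_univ_two, Matrix.SpecialLinearGroup.coe_mk]
  have e2 : ((l*u : SL2) : M2) 0 0 = 1 := by
    show ((l:M2) * (u:M2)) 0 0 = 1
    rw [hu, hlv]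
    simp [Matrix.mul_apply, Fin.sum_univ_two, Matrix.SpecialLinearGroup.coe_mk]
  rw [e1, e2] at h00
  have : (1:F) = 0 := by linear_combination h00
  exact one_ne_zero this


lemma indep_of_noncomm (x y : M2) (hxy : x * y ≠ y * x) :
    LinearIndependent F ![(1 : M2), x, y] := by
  rw [Fintype.linearIndependent_iff]
  intro c hc
  rw [Fin.sum_univ_three] at hc
  simp only [Matrix.cons_val_zero, Matrix.cons_val_one, Matrix.head_cons,
    Matrix.cons_val_two, Matrix.tail_cons] at hc
  have h2 : c 2 = 0 := by
    by_contra h2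
    have he : c 2 • y = -(c 0 • 1) - c 1 • x := by
      rw [eq_sub_iff_add_eq, eq_neg_iff_add_eq_zero, ← hc]
      abel
    have hcm : Commute x (c 2 • y) := by
      rw [he]
      exact Commute.sub_right (Commute.neg_right ((Commute.one_right x).smul_right _))
        ((Commute.refl x).smul_right _)
    have : x * y = y * x := by
      have := hcm
      unfold Commute SemiconjBy at this
      rw [mul_smul_comm, smul_mul_assoc] at this
      exact smul_right_injective _ h2 this
    exact hxy this
  have h1 : c 1 = 0 := by
    by_contra h1
    have he : c 1 • x = -(c 0 • 1) - c 2 • y := by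
      rw [eq_sub_iff_add_eq, eq_neg_iff_add_eq_zero, ← hc]
      abel
    have hcm : Commute y (c 1 • x) := by
      rw [he]
      exact Commute.sub_right (Commute.neg_right ((Commute.one_right y).smul_right _))
        ((Commute.refl y).smul_right _)
    have : y * x = x * y := by
      have := hcm
      unfold Commute SemiconjBy at this
      rw [mul_smul_comm, smul_mul_assoc] at this
      exact smul_right_injective _ h1 this
    exact hxy this.symm
  have h0 : c 0 = 0 := by
    have hz : c 0 • (1 : M2) = 0 := by rw [h1, h2] at hc; simpa using hc
    rcases smul_eq_zero.mp hz with h | h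
    · exact h
    · exact absurd h one_ne_zero
  intro i
  fin_cases i <;> assumption


lemma span_sq_top (s : Set SL2) (h1 : (1 : SL2) ∈ s)
    (hgen : Subgroup.closure s = ⊤) :
    Submodule.span F ((fun g : SL2 => (g : M2)) '' (s * s)) = ⊤ := by
  set S : Set M2 := (fun g : SL2 => (g : M2)) '' s with hS
  have hSS : (fun g : SL2 => (g : M2)) '' (s * s) = S * S := by
    ext m
    constructor
    · rintro ⟨g, hg, rfl⟩
      rw [Set.mem_mul] at hg
      rcases hg with ⟨x, hx, y, hy, rfl⟩
      exact ⟨x, ⟨x, hx, rfl⟩, y, ⟨y, hy, rfl⟩, rfl⟩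
    · rintro ⟨m1, ⟨x, hx, rfl⟩, m2, ⟨y, hy, rfl⟩, rfl⟩
      exact ⟨x * y, Set.mul_mem_mul hx hy, rfl⟩
  rw [hSS]
  by_contra htop
  have h1S : (1 : M2) ∈ S := ⟨1, h1, rfl⟩
  have hle : Submodule.span F S ≤ Submodule.span F (S * S) :=
    Submodule.span_mono (Set.subset_mul_left S h1S)
  have hfr : Module.finrank F M2 = 4 := by
    rw [Module.finrank_matrix]
    simp
  have hW2lt : Module.finrank F (Submodule.span F (S * S)) < 4 := by
    rw [← hfr]
    exact Submodule.finrank_lt htop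
  obtain ⟨g₀, hg₀, h₀, hh₀, hnc⟩ := exists_noncomm s hgen
  have hind := indep_of_noncomm (F := F) _ _ hnc
  have hrange : Set.range ![(1 : M2), (g₀ : M2), (h₀ : M2)] ⊆ S := by
    rintro m ⟨i, rfl⟩
    fin_cases i
    · exact ⟨1, h1, rfl⟩
    · exact ⟨g₀, hg₀, rfl⟩
    · exact ⟨h₀, hh₀, rfl⟩
  have h3 : 3 ≤ Module.finrank F (Submodule.span F S) := by
    have hcard := finrank_span_eq_card hind
    have h3' : Fintype.card (Fin (Nat.succ 0).succ.succ) = 3 := rfl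
    rw [h3'] at hcard
    rw [← hcard]
    exact Submodule.finrank_mono (Submodule.span_mono hrange)
  have hW1W2 : Submodule.span F S = Submodule.span F (S * S) :=
    Submodule.eq_of_le_of_finrank_le hle (by omega)
  have hmulmem : ∀ x y : M2, x ∈ Submodule.span F S → y ∈ Submodule.span F S →
      x * y ∈ Submodule.span F S := by
    intro x y hx hy
    have := Submodule.mul_mem_mul hx hy
    rwa [Submodule.span_mul_span, ← hW1W2] at this
  have hallg : ∀ g : SL2, (g : M2) ∈ Submodule.span F S := by
    intro g
    let K : Subgroup SL2 :=
      { carrier := {g : SL2 | (g : M2) ∈ Submodule.span F S}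
        one_mem' := Submodule.subset_span h1S
        mul_mem' := fun hx hy => hmulmem _ _ hx hy
        inv_mem' := by
          intro x hx
          show ((x⁻¹ : SL2) : M2) ∈ Submodule.span F S
          rw [sl2_inv_coe]
          exact Submodule.sub_mem _
            (Submodule.smul_mem _ _ (Submodule.subset_span h1S)) hx }
    have hcl : Subgroup.closure s ≤ K :=
      (Subgroup.closure_le _).mpr (fun a ha => Submodule.subset_span ⟨a, ha, rfl⟩)
    rw [hgen] at hcl
    exact hcl (Subgroup.mem_top g)
  exact htop (hW1W2 ▸ top_of_all_mem (Submodule.span F S) hallg)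


theorem stmt_14_aux [Fintype F] [DecidableEq F] [DecidableEq SL2]
    (A : Finset SL2)
    (hgen : Subgroup.closure (A : Set SL2) = ⊤) :
    (A.card : ℝ) / 4 ≤
      (((A ∪ A⁻¹ ∪ {1}) * (A ∪ A⁻¹ ∪ {1}) * (A ∪ A⁻¹ ∪ {1})).filter
        (fun g => Matrix.trace g.val ≠ 0)).card := by
  classical
  set B : Finset SL2 := A ∪ A⁻¹ ∪ {1} with hB
  set V : Finset SL2 := (B * B * B).filter (fun g => Matrix.trace g.val ≠ 0) with hV
  have h1B : (1 : SL2) ∈ B := Finset.mem_union_right _ (Finset.mem_singleton_self 1)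
  have hAB : A ⊆ B := Finset.subset_union_left.trans Finset.subset_union_left
  have hclos : Subgroup.closure (↑B : Set SL2) = ⊤ := by
    rw [eq_top_iff, ← hgen]
    exact Subgroup.closure_mono (by exact_mod_cast hAB)
  have hspan := span_sq_top (↑B : Set SL2) (by exact_mod_cast h1B) hclos
  set T : Set M2 := (fun g : SL2 => (g : M2)) '' ((↑B : Set SL2) * ↑B) with hT
  obtain ⟨b, hbT, -, hTb, hbind⟩ :=
    exists_linearIndepOn_id_extension (linearIndependent_empty F M2) (Set.empty_subset T)
  have hbtop : Submodule.span F b = ⊤ := by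
    rw [eq_top_iff, ← hspan]
    exact Submodule.span_le.mpr hTb
  have hbfin : b.Finite := hbind.finite
  haveI := hbfin.fintype
  have hbcard : b.toFinset.card = 4 := by
    have hh := finrank_span_set_eq_card hbind
    rw [hbtop, finrank_top, Module.finrank_matrix] at hh
    simpa using hh.symm
  set P : Finset SL2 := (B * B).filter (fun p => (p : M2) ∈ b) with hP
  have hPsub : P ⊆ B * B := Finset.filter_subset _ _
  have hPcard : P.card ≤ 4 := by
    have hinj : Set.InjOn (fun p : SL2 => (p : M2)) ↑P := fun x _ y _ h => Subtype.ext h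
    have himg : (P.image (fun p : SL2 => (p : M2))).card = P.card :=
      Finset.card_image_of_injOn hinj
    rw [← himg, ← hbcard]
    apply Finset.card_le_card
    intro m hm
    rw [Finset.mem_image] at hm
    obtain ⟨p, hp, rfl⟩ := hm
    rw [Set.mem_toFinset]
    exact (Finset.mem_filter.mp hp).2
  have hspanP : Submodule.span F ((fun p : SL2 => (p : M2)) '' ↑P) = ⊤ := by
    rw [eq_top_iff, ← hbtop]
    refine Submodule.span_le.mpr fun m hm => Submodule.subset_span ?_
    obtain ⟨g, hg, hmg⟩ := hbT hm
    refine ⟨g, ?_, hmg⟩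
    have hgBB : g ∈ B * B := by
      rw [← Finset.mem_coe, Finset.coe_mul]
      exact hg
    exact Finset.mem_filter.mpr ⟨hgBB, Set.mem_of_eq_of_mem hmg hm⟩
  have hgood : ∀ a ∈ A, ∃ p ∈ P, Matrix.trace ((a * p : SL2) : M2) ≠ 0 := by
    intro a ha
    by_contra hall
    push_neg at hall
    have hker : ∀ m : M2, Matrix.trace ((a : M2) * m) = 0 := by
      have hφ : Submodule.span F ((fun p : SL2 => (p : M2)) '' ↑P) ≤
          LinearMap.ker ((Matrix.traceLinearMap (Fin 2) F F).comp
            (LinearMap.mulLeft F (a : M2))) := by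
        rw [Submodule.span_le]
        rintro m ⟨p, hp, rfl⟩
        simp only [SetLike.mem_coe, LinearMap.mem_ker, LinearMap.comp_apply,
          LinearMap.mulLeft_apply, Matrix.traceLinearMap_apply]
        exact hall p (by exact_mod_cast hp)
      rw [hspanP] at hφ
      intro m
      exact LinearMap.mem_ker.mp (hφ Submodule.mem_top)
    have h00 := hker !![1,0;0,0]
    have h01 := hker !![0,0;1,0]
    have h10 := hker !![0,1;0,0]
    have h11 := hker !![0,0;0,1]
    have e00 : ((a : M2)) 0 0 = 0 := by
      simpa [Matrix.trace_fin_two, Matrix.mul_apply, Fin.sum_univ_two] using h00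
    have e01 : ((a : M2)) 0 1 = 0 := by
      simpa [Matrix.trace_fin_two, Matrix.mul_apply, Fin.sum_univ_two] using h01
    have hdet := a.prop
    rw [Matrix.det_fin_two] at hdet
    rw [e00, e01] at hdet
    simp at hdet
  have hkey : A.card ≤ 4 * V.card := by
    have hsub : A ⊆ P.biUnion
        (fun p => A.filter (fun a => Matrix.trace ((a * p : SL2) : M2) ≠ 0)) := by
      intro a ha
      obtain ⟨p, hp, hne⟩ := hgood a ha
      exact Finset.mem_biUnion.mpr ⟨p, hp, Finset.mem_filter.mpr ⟨ha, hne⟩⟩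
    have hper : ∀ p ∈ P,
        (A.filter (fun a => Matrix.trace ((a * p : SL2) : M2) ≠ 0)).card ≤ V.card := by
      intro p hp
      apply Finset.card_le_card_of_injOn (fun a => a * p)
      · intro a haf
        replace haf := Finset.mem_filter.mp (Finset.mem_coe.mp haf)
        rw [Finset.mem_coe, hV, Finset.mem_filter]
        constructor
        · have haB : a ∈ B := hAB haf.1
          have hmem : a * p ∈ B * (B * B) := Finset.mul_mem_mul haB (hPsub hp)
          rwa [← mul_assoc] at hmem
        · exact haf.2
      · intro x _ y _ h
        exact mul_right_cancel h
    calc A.card ≤ (P.biUnion _).card := Finset.card_le_card hsub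
      _ ≤ ∑ p ∈ P, (A.filter (fun a => Matrix.trace ((a * p : SL2) : M2) ≠ 0)).card :=
          Finset.card_biUnion_le
      _ ≤ ∑ _p ∈ P, V.card := Finset.sum_le_sum hper
      _ = P.card * V.card := by rw [Finset.sum_const, smul_eq_mul]
      _ ≤ 4 * V.card := Nat.mul_le_mul_right _ hPcard
  rw [div_le_iff₀ (by norm_num : (0:ℝ) < 4)]
  calc (A.card : ℝ) ≤ ((4 * V.card : ℕ) : ℝ) := by exact_mod_cast hkey
    _ = (V.card : ℝ) * 4 := by push_cast; ring


end Stmt14Aux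

theorem stmt_14 {F : Type*} [Field F] [Fintype F] [DecidableEq F]
    [DecidableEq (Matrix.SpecialLinearGroup (Fin 2) F)]
    (A : Finset (Matrix.SpecialLinearGroup (Fin 2) F))
    (hgen : Subgroup.closure (A : Set (Matrix.SpecialLinearGroup (Fin 2) F)) = ⊤) :
    (A.card : ℝ) / 4 ≤
      (((A ∪ A⁻¹ ∪ {1}) * (A ∪ A⁻¹ ∪ {1}) * (A ∪ A⁻¹ ∪ {1})).filter
        (fun g => Matrix.trace g.val ≠ 0)).card :=
  stmt_14_aux A hgen
end

section
/- Let F be a finite field, G = SL₂(F), A ⊆ G with ⟨A⟩ = G, and E a proper subfield of F. If some element of A has trace outside E, then the set A^{[4]} of words of length at most 4 in A ∪ A⁻¹ ∪ {1} contains at least |A|/12 elements whose trace lies outside E. -/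
open Pointwise
section Aux
variable {F : Type*} [Field F]

private lemma sl2_val_mul (g h : Matrix.SpecialLinearGroup (Fin 2) F) :
    (g * h).val = g.val * h.val := rfl

private lemma sl2_val_inv (h : Matrix.SpecialLinearGroup (Fin 2) F) :
    (h⁻¹).val = Matrix.adjugate h.val := rfl

private lemma sl2_trace_id (g h : Matrix.SpecialLinearGroup (Fin 2) F) :
    Matrix.trace (g * h).val + Matrix.trace (g * h⁻¹).val
      = Matrix.trace g.val * Matrix.trace h.val := by
  rw [sl2_val_mul, sl2_val_mul, sl2_val_inv, Matrix.adjugate_fin_two]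
  simp [Matrix.trace_fin_two, Matrix.mul_apply, Fin.sum_univ_two]
  ring

private lemma sl2_sq (g : Matrix.SpecialLinearGroup (Fin 2) F) (h : Matrix.trace g.val = 0) :
    g.val * g.val = -1 := by
  have hdet := g.prop
  rw [Matrix.det_fin_two] at hdet
  rw [Matrix.trace_fin_two] at h
  ext i j
  fin_cases i <;> fin_cases j <;>
    simp [Matrix.mul_apply, Fin.sum_univ_two, Matrix.one_apply]
  · linear_combination g.val 0 0 * h - hdet
  · linear_combination g.val 0 1 * h
  · linear_combination g.val 1 0 * h
  · linear_combination g.val 1 1 * h - hdet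

private lemma sl2_sq_eq (g h : Matrix.SpecialLinearGroup (Fin 2) F)
    (hg : Matrix.trace g.val = 0) (hgh : Matrix.trace (g*h).val = 0) :
    (g*h)*(g*h) = g*g := by
  apply Subtype.ext
  rw [sl2_val_mul ((g*h)) (g*h), sl2_val_mul g g, sl2_sq _ hgh, sl2_sq _ hg]

private lemma sl2_conj (g h : Matrix.SpecialLinearGroup (Fin 2) F)
    (hg : Matrix.trace g.val = 0) (hgh : Matrix.trace (g*h).val = 0) :
    h * g = g * h⁻¹ := by
  have e1 := sl2_sq_eq g h hg hgh
  calc h * g = g⁻¹ * ((g*h)*(g*h)) * h⁻¹ := by group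
    _ = g⁻¹ * (g*g) * h⁻¹ := by rw [e1]
    _ = g * h⁻¹ := by group

private lemma sl2_comm_sq (g h : Matrix.SpecialLinearGroup (Fin 2) F)
    (hg : Matrix.trace g.val = 0) (hgh : Matrix.trace (g*h).val = 0)
    (hc : g*h = h*g) : h*h = 1 := by
  have e1 := sl2_sq_eq g h hg hgh
  have e2 : (g*g)*(h*h) = (g*g) * 1 := by
    rw [mul_one]
    calc (g*g)*(h*h) = g*(g*h)*h := by group
      _ = g*(h*g)*h := by rw [hc]
      _ = (g*h)*(g*h) := by group
      _ = g*g := e1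
  exact mul_left_cancel e2

variable [DecidableEq F]

private def escMap (E : Subfield F) [DecidablePred (· ∈ E)]
    (b a₀ a : Matrix.SpecialLinearGroup (Fin 2) F) :
    Matrix.SpecialLinearGroup (Fin 2) F :=
  if Matrix.trace a.val ∉ E then a
  else if Matrix.trace a.val ≠ 0 then
    (if Matrix.trace (a*b).val ∉ E then a*b else a*b⁻¹)
  else if Matrix.trace (a*b).val ∉ E then a*b
  else if Matrix.trace (a*b).val ≠ 0 then a*b*b
  else if Matrix.trace (a*a₀).val ∉ E then a*a₀
  else if Matrix.trace (a*a₀).val ≠ 0 then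
    (if Matrix.trace (a*a₀*b).val ∉ E then a*a₀*b else a*a₀*b⁻¹)
  else if Matrix.trace (a*a₀*b).val ∉ E then a*a₀*b
  else a*a₀*b*b

private lemma escMap_spec (E : Subfield F) [DecidablePred (· ∈ E)]
    (b a₀ a : Matrix.SpecialLinearGroup (Fin 2) F)
    (hbE : Matrix.trace b.val ∉ E)
    (ha₀ : Matrix.trace a.val = 0 → Matrix.trace (a*b).val = 0 →
      Matrix.trace a₀.val = 0 ∧ Matrix.trace (a₀*b).val = 0) :
    Matrix.trace (escMap E b a₀ a).val ∉ E ∧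
    (escMap E b a₀ a = a ∨ escMap E b a₀ a = a*b ∨ escMap E b a₀ a = a*b⁻¹ ∨
      escMap E b a₀ a = a*b*b ∨
      (Matrix.trace a.val = 0 ∧ Matrix.trace (a*b).val = 0 ∧
        (escMap E b a₀ a = a*a₀ ∨ escMap E b a₀ a = a*a₀*b ∨
          escMap E b a₀ a = a*a₀*b⁻¹ ∨ escMap E b a₀ a = a*a₀*b*b))) := by
  have h2E : (2:F) ∈ E := by
    rw [show (2:F) = 1 + 1 by norm_num]
    exact E.add_mem E.one_mem E.one_mem
  have hesc1 : ∀ s : F, s ∈ E → s ≠ 0 → s * Matrix.trace b.val ∉ E := by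
    intro s hs hs0 hmem
    exact hbE (by
      have h' := E.mul_mem (E.inv_mem hs) hmem
      rwa [inv_mul_cancel_left₀ hs0] at h')
  unfold escMap
  split_ifs with h1 h2 h3 h4 h5 h6 h7 h8 h9
  -- 1 : τa ∈ E, τa ≠ 0, τ(ab) ∈ E ⊢ a*b⁻¹
  · refine ⟨?_, Or.inr (Or.inr (Or.inl rfl))⟩
    intro hmem
    have hid := sl2_trace_id a b
    have hprod : Matrix.trace a.val * Matrix.trace b.val ∈ E := by
      rw [← hid]; exact E.add_mem h3 hmem
    exact hesc1 _ h1 h2 hprod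
  -- 2 : ⊢ a*b
  · exact ⟨h3, Or.inr (Or.inl rfl)⟩
  -- 3 : τa = 0, τ(ab) ∈ E, τ(ab) ≠ 0 ⊢ a*b*b
  · refine ⟨?_, Or.inr (Or.inr (Or.inr (Or.inl rfl)))⟩
    rw [not_ne_iff] at h2
    have hid := sl2_trace_id (a*b) b
    have hab : a*b*b⁻¹ = a := by group
    rw [hab, h2] at hid
    intro hmem
    have hprod : Matrix.trace (a*b).val * Matrix.trace b.val ∈ E := by
      rw [← hid]; simpa using hmem
    exact hesc1 _ h4 h5 hprod
  -- 4 : ... τ(aa₀) ∈ E, ≠ 0, τ(aa₀b) ∈ E ⊢ a*a₀*b⁻¹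
  · rw [not_ne_iff] at h2 h5
    refine ⟨?_, Or.inr (Or.inr (Or.inr (Or.inr ⟨h2, h5, Or.inr (Or.inr (Or.inl rfl))⟩)))⟩
    intro hmem
    have hid := sl2_trace_id (a*a₀) b
    have hprod : Matrix.trace (a*a₀).val * Matrix.trace b.val ∈ E := by
      rw [← hid]; exact E.add_mem h8 hmem
    exact hesc1 _ h6 h7 hprod
  -- 5 : ⊢ a*a₀*b
  · rw [not_ne_iff] at h2 h5
    exact ⟨h8, Or.inr (Or.inr (Or.inr (Or.inr ⟨h2, h5, Or.inr (Or.inl rfl)⟩)))⟩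
  -- 6 : τ(aa₀) = 0, τ(aa₀b) ∈ E ⊢ a*a₀*b*b
  · rw [not_ne_iff] at h2 h5 h7
    refine ⟨?_, Or.inr (Or.inr (Or.inr (Or.inr ⟨h2, h5, Or.inr (Or.inr (Or.inr rfl))⟩)))⟩
    obtain ⟨ha₀tr, ha₀b⟩ := ha₀ h2 h5
    have hcb0 : Matrix.trace (a*a₀*b).val ≠ 0 := by
      intro habs
      have c1 : b * a = a * b⁻¹ := sl2_conj a b h2 h5
      have c2 : b * a₀ = a₀ * b⁻¹ := sl2_conj a₀ b ha₀tr ha₀b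
      have c2' : b⁻¹ * a₀ = a₀ * b := by
        rw [inv_mul_eq_iff_eq_mul, ← mul_assoc, c2, inv_mul_cancel_right]
      have hcomm : (a*a₀)*b = b*(a*a₀) := by
        calc (a*a₀)*b = a*(a₀*b) := by group
          _ = a*(b⁻¹*a₀) := by rw [c2']
          _ = (a*b⁻¹)*a₀ := by group
          _ = (b*a)*a₀ := by rw [c1]
          _ = b*(a*a₀) := by group
      have hb2 : b*b = 1 := sl2_comm_sq (a*a₀) b h7 habs hcomm
      have hid := sl2_trace_id b b
      have hbb1 : b * b⁻¹ = 1 := by group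
      rw [hb2, hbb1] at hid
      have htr1 : Matrix.trace ((1 : Matrix.SpecialLinearGroup (Fin 2) F)).val = 2 := by
        simp [Matrix.trace_fin_two]
      rw [htr1] at hid
      have hfac : (Matrix.trace b.val - 2) * (Matrix.trace b.val + 2) = 0 := by
        linear_combination -hid
      rcases mul_eq_zero.1 hfac with h | h
      · exact hbE (by rw [sub_eq_zero.1 h]; exact h2E)
      · refine hbE ?_
        have hb2' : Matrix.trace b.val = -2 := by linear_combination h
        rw [hb2']; exact E.neg_mem h2E
    have hid := sl2_trace_id (a*a₀*b) b
    have hco : a*a₀*b*b⁻¹ = a*a₀ := by group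
    rw [hco, h7] at hid
    intro hmem
    have hprod : Matrix.trace (a*a₀*b).val * Matrix.trace b.val ∈ E := by
      rw [← hid]; simpa using hmem
    exact hesc1 _ h9 hcb0 hprod
  -- 7 : ⊢ a*a₀*b  (τ(aa₀) = 0 , τ(aa₀b) ∉ E)
  · rw [not_ne_iff] at h2 h5
    exact ⟨h9, Or.inr (Or.inr (Or.inr (Or.inr ⟨h2, h5, Or.inr (Or.inl rfl)⟩)))⟩
  -- 8 : ⊢ a*a₀
  · rw [not_ne_iff] at h2 h5
    exact ⟨h6, Or.inr (Or.inr (Or.inr (Or.inr ⟨h2, h5, Or.inl rfl⟩)))⟩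
  -- 9 : ⊢ a*b
  · exact ⟨h4, Or.inr (Or.inl rfl)⟩
  -- 10 : ⊢ a
  · exact ⟨h1, Or.inl rfl⟩

end Aux

theorem stmt_15 {F : Type*} [Field F] [Fintype F] [DecidableEq F]
    [DecidableEq (Matrix.SpecialLinearGroup (Fin 2) F)]
    (A : Finset (Matrix.SpecialLinearGroup (Fin 2) F))
    (hgen : Subgroup.closure (A : Set (Matrix.SpecialLinearGroup (Fin 2) F)) = ⊤)
    (E : Subfield F) (hE : E ≠ ⊤) [DecidablePred (· ∈ E)]
    (hesc : ∃ a ∈ A, Matrix.trace a.val ∉ E) :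
    (A.card : ℝ) / 12 ≤
      (((A ∪ A⁻¹ ∪ {1}) * (A ∪ A⁻¹ ∪ {1}) * (A ∪ A⁻¹ ∪ {1}) * (A ∪ A⁻¹ ∪ {1})).filter
        (fun g : Matrix.SpecialLinearGroup (Fin 2) F => Matrix.trace g.val ∉ E)).card := by
  classical
  obtain ⟨b, hbA, hbE⟩ := hesc
  set T : Finset (Matrix.SpecialLinearGroup (Fin 2) F) := A ∪ A⁻¹ ∪ {1} with hT
  set S : Finset (Matrix.SpecialLinearGroup (Fin 2) F) :=
    ((T * T * T * T).filter
      (fun g : Matrix.SpecialLinearGroup (Fin 2) F => Matrix.trace g.val ∉ E)) with hS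
  -- basic membership facts
  have haT : ∀ a ∈ A, a ∈ T :=
    fun a ha => Finset.mem_union.2 (Or.inl (Finset.mem_union.2 (Or.inl ha)))
  have hbT : b ∈ T := haT b hbA
  have hbiT : b⁻¹ ∈ T :=
    Finset.mem_union.2 (Or.inl (Finset.mem_union.2 (Or.inr (Finset.inv_mem_inv hbA))))
  have h1T : (1 : Matrix.SpecialLinearGroup (Fin 2) F) ∈ T :=
    Finset.mem_union.2 (Or.inr (Finset.mem_singleton_self 1))
  have hm4 : ∀ w x y z : Matrix.SpecialLinearGroup (Fin 2) F,
      w ∈ T → x ∈ T → y ∈ T → z ∈ T → w*x*y*z ∈ T*T*T*T :=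
    fun w x y z hw hx hy hz =>
      Finset.mul_mem_mul (Finset.mul_mem_mul (Finset.mul_mem_mul hw hx) hy) hz
  have hm2 : ∀ x y : Matrix.SpecialLinearGroup (Fin 2) F,
      x ∈ T → y ∈ T → x*y ∈ T*T*T*T := fun x y hx hy => by
    have hxy : x*y = x*y*1*1 := by group
    rw [hxy]; exact hm4 _ _ _ _ hx hy h1T h1T
  have hm3 : ∀ x y z : Matrix.SpecialLinearGroup (Fin 2) F,
      x ∈ T → y ∈ T → z ∈ T → x*y*z ∈ T*T*T*T := fun x y z hx hy hz => by
    have hxyz : x*y*z = x*y*z*1 := by group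
    rw [hxyz]; exact hm4 _ _ _ _ hx hy hz h1T
  have hm1 : ∀ x : Matrix.SpecialLinearGroup (Fin 2) F, x ∈ T → x ∈ T*T*T*T := fun x hx => by
    have hx1 : x = x*1*1*1 := by group
    rw [hx1]; exact hm4 _ _ _ _ hx h1T h1T h1T
  -- a₀
  set a₀ : Matrix.SpecialLinearGroup (Fin 2) F :=
    if hex : ∃ x, x ∈ A ∧ Matrix.trace x.val = 0 ∧ Matrix.trace (x*b).val = 0
    then hex.choose else 1 with ha₀def
  have ha₀spec : (∃ x, x ∈ A ∧ Matrix.trace x.val = 0 ∧ Matrix.trace (x*b).val = 0) →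
      a₀ ∈ A ∧ Matrix.trace a₀.val = 0 ∧ Matrix.trace (a₀*b).val = 0 := by
    intro hex
    rw [ha₀def, dif_pos hex]
    exact hex.choose_spec
  -- maps to
  have hmapsto : ∀ a ∈ A, escMap E b a₀ a ∈ S := by
    intro a ha
    have hspec := escMap_spec E b a₀ a hbE (fun h2 h4 => (ha₀spec ⟨a, ha, h2, h4⟩).2)
    obtain ⟨htr, hshape⟩ := hspec
    rw [hS]
    refine Finset.mem_filter.2 ⟨?_, htr⟩
    rcases hshape with h | h | h | h | ⟨h2, h4, h | h | h | h⟩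
    · rw [h]; exact hm1 _ (haT a ha)
    · rw [h]; exact hm2 _ _ (haT a ha) hbT
    · rw [h]; exact hm2 _ _ (haT a ha) hbiT
    · rw [h]; exact hm3 _ _ _ (haT a ha) hbT hbT
    · rw [h]; exact hm2 _ _ (haT a ha) (haT a₀ (ha₀spec ⟨a, ha, h2, h4⟩).1)
    · rw [h]; exact hm3 _ _ _ (haT a ha) (haT a₀ (ha₀spec ⟨a, ha, h2, h4⟩).1) hbT
    · rw [h]; exact hm3 _ _ _ (haT a ha) (haT a₀ (ha₀spec ⟨a, ha, h2, h4⟩).1) hbiT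
    · rw [h]; exact hm4 _ _ _ _ (haT a ha) (haT a₀ (ha₀spec ⟨a, ha, h2, h4⟩).1) hbT hbT
  -- fibers
  have hfiber : ∀ g ∈ S, (A.filter (fun a => escMap E b a₀ a = g)).card ≤ 12 := by
    intro g hg
    have hgE : Matrix.trace g.val ∉ E := (Finset.mem_filter.1 hg).2
    have hsub : A.filter (fun a => escMap E b a₀ a = g) ⊆
        {g, g*b⁻¹, g*b, g*b⁻¹*b⁻¹, g*a₀⁻¹, g*b⁻¹*a₀⁻¹, g*b*a₀⁻¹, g*b⁻¹*b⁻¹*a₀⁻¹} := by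
      intro x hx
      obtain ⟨hxA, hfx⟩ := Finset.mem_filter.1 hx
      have hspec := escMap_spec E b a₀ x hbE (fun h2 h4 => (ha₀spec ⟨x, hxA, h2, h4⟩).2)
      simp only [Finset.mem_insert, Finset.mem_singleton]
      rcases hspec.2 with h | h | h | h | ⟨_, _, h | h | h | h⟩ <;> rw [hfx] at h
      · exact Or.inl h.symm
      · exact Or.inr (Or.inl (by rw [h]; group))
      · exact Or.inr (Or.inr (Or.inl (by rw [h]; group)))
      · exact Or.inr (Or.inr (Or.inr (Or.inl (by rw [h]; group))))
      · exact Or.inr (Or.inr (Or.inr (Or.inr (Or.inl (by rw [h]; group)))))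
      · exact Or.inr (Or.inr (Or.inr (Or.inr (Or.inr (Or.inl (by rw [h]; group))))))
      · exact Or.inr (Or.inr (Or.inr (Or.inr (Or.inr (Or.inr (Or.inl (by
          rw [h]; group)))))))
      · exact Or.inr (Or.inr (Or.inr (Or.inr (Or.inr (Or.inr (Or.inr (by
          rw [h]; group)))))))
    calc (A.filter (fun a => escMap E b a₀ a = g)).card ≤ _ := Finset.card_le_card hsub
      _ ≤ 12 := by
        refine le_trans ?_ (by norm_num : (8:ℕ) ≤ 12)
        refine (Finset.card_insert_le _ _).trans (Nat.succ_le_succ ?_)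
        refine (Finset.card_insert_le _ _).trans (Nat.succ_le_succ ?_)
        refine (Finset.card_insert_le _ _).trans (Nat.succ_le_succ ?_)
        refine (Finset.card_insert_le _ _).trans (Nat.succ_le_succ ?_)
        refine (Finset.card_insert_le _ _).trans (Nat.succ_le_succ ?_)
        refine (Finset.card_insert_le _ _).trans (Nat.succ_le_succ ?_)
        refine (Finset.card_insert_le _ _).trans (Nat.succ_le_succ ?_)
        simp
  have hcount : A.card ≤ 12 * S.card :=
    Finset.card_le_mul_card_image_of_maps_to hmapsto 12 hfiber
  rw [div_le_iff₀ (by norm_num : (0:ℝ) < 12)]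
  calc (A.card : ℝ) ≤ ((12 * S.card : ℕ) : ℝ) := by exact_mod_cast hcount
    _ = (S.card : ℝ) * 12 := by push_cast; ring
end

section
/- Let G be a finite group generated by a subset A, and let H, K be proper subgroups of G. Then the set A^{[4]} of words of length at most 4 in A ∪ A⁻¹ ∪ {1} satisfies |A^{[4]} \ (H ∪ K)| ≥ |A|/4. -/
open Pointwise

theorem stmt_17 {G : Type*} [Group G] [DecidableEq G]
    (A : Finset G) (hgen : Subgroup.closure (A : Set G) = ⊤)
    (H K : Subgroup G) (hH : H ≠ ⊤) (hK : K ≠ ⊤)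
    [DecidablePred (· ∈ H)] [DecidablePred (· ∈ K)] :
    (A.card : ℝ) / 4 ≤
      (((A ∪ A⁻¹ ∪ {1}) * (A ∪ A⁻¹ ∪ {1}) * (A ∪ A⁻¹ ∪ {1}) * (A ∪ A⁻¹ ∪ {1})).filter
        (fun g => g ∉ H ∧ g ∉ K)).card := by
  set S : Finset G := A ∪ A⁻¹ ∪ {1} with hS
  set T : Finset G := ((S * S * S * S).filter (fun g => g ∉ H ∧ g ∉ K)) with hT
  have h1S : (1 : G) ∈ S := by
    simp [hS]
  have hAS : ∀ x ∈ A, x ∈ S := by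
    intro x hx
    simp [hS, hx]
  have hmul4 : ∀ x ∈ S, ∀ y ∈ S, ∀ z ∈ S, ∀ w ∈ S, x * y * z * w ∈ S * S * S * S :=
    fun x hx y hy z hz w hw =>
      Finset.mul_mem_mul (Finset.mul_mem_mul (Finset.mul_mem_mul hx hy) hz) hw
  have hP1 : ∀ x ∈ S, x ∈ S * S * S * S := fun x hx => by
    simpa using hmul4 x hx 1 h1S 1 h1S 1 h1S
  have hP2 : ∀ x ∈ S, ∀ y ∈ S, x * y ∈ S * S * S * S := fun x hx y hy => by
    simpa using hmul4 x hx y hy 1 h1S 1 h1S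
  have hP3 : ∀ x ∈ S, ∀ y ∈ S, ∀ z ∈ S, x * y * z ∈ S * S * S * S := fun x hx y hy z hz => by
    simpa using hmul4 x hx y hy z hz 1 h1S
  have hTmem : ∀ x ∈ S * S * S * S, x ∉ H → x ∉ K → x ∈ T := fun x hx h1 h2 =>
    Finset.mem_filter.2 ⟨hx, h1, h2⟩
  -- existence of generators outside H and outside K
  have hexH : ∃ a ∈ A, a ∉ H := by
    by_contra h
    push_neg at h
    exact hH (top_unique (hgen ▸ (Subgroup.closure_le H).2 (fun x hx => h x hx)))
  have hexK : ∃ b ∈ A, b ∉ K := by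
    by_contra h
    push_neg at h
    exact hK (top_unique (hgen ▸ (Subgroup.closure_le K).2 (fun x hx => h x hx)))
  -- the key counting lemma
  have key : ∀ B1 B2 B3 B4 : Finset G,
      (∀ x ∈ A, x ∈ B1 ∨ x ∈ B2 ∨ x ∈ B3 ∨ x ∈ B4) →
      B1.card ≤ T.card → B2.card ≤ T.card → B3.card ≤ T.card → B4.card ≤ T.card →
      (A.card : ℝ) / 4 ≤ T.card := by
    intro B1 B2 B3 B4 hcov h1 h2 h3 h4
    have hsub : A ⊆ B1 ∪ B2 ∪ B3 ∪ B4 := by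
      intro x hx
      rcases hcov x hx with h | h | h | h <;> simp [Finset.mem_union, h]
    have hc : A.card ≤ 4 * T.card := by
      have c0 := Finset.card_le_card hsub
      have u1 := Finset.card_union_le (B1 ∪ B2 ∪ B3) B4
      have u2 := Finset.card_union_le (B1 ∪ B2) B3
      have u3 := Finset.card_union_le B1 B2
      omega
    rw [div_le_iff₀ (by norm_num : (0:ℝ) < 4)]
    have : (A.card : ℝ) ≤ ((4 * T.card : ℕ) : ℝ) := by exact_mod_cast hc
    push_cast at this
    linarith
  by_cases hcase1 : ∃ a ∈ A, a ∈ K ∧ a ∉ H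
  · by_cases hcase2 : ∃ b ∈ A, b ∈ H ∧ b ∉ K
    · -- main branch
      obtain ⟨a, haA, haK, haH⟩ := hcase1
      obtain ⟨b, hbA, hbH, hbK⟩ := hcase2
      refine key T (T.image (fun t => a⁻¹ * t)) (T.image (fun t => t * b⁻¹))
        (T.image (fun t => a⁻¹ * t * b⁻¹)) ?_ le_rfl (Finset.card_image_le)
        (Finset.card_image_le) (Finset.card_image_le)
      intro x hx
      by_cases xH : x ∈ H <;> by_cases xK : x ∈ K
      · -- x ∈ H ∩ K : use a*x*b
        have hm : a * x * b ∈ T := by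
          refine hTmem _ (hP3 a (hAS a haA) x (hAS x hx) b (hAS b hbA)) ?_ ?_
          · rw [H.mul_mem_cancel_right hbH, H.mul_mem_cancel_right xH]
            exact haH
          · rw [mul_assoc, K.mul_mem_cancel_left haK, K.mul_mem_cancel_left xK]
            exact hbK
        exact Or.inr (Or.inr (Or.inr (Finset.mem_image.2 ⟨a * x * b, hm, by group⟩)))
      · -- x ∈ H \ K : use a*x
        have hm : a * x ∈ T := by
          refine hTmem _ (hP2 a (hAS a haA) x (hAS x hx)) ?_ ?_
          · rw [H.mul_mem_cancel_right xH]; exact haH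
          · rw [K.mul_mem_cancel_left haK]; exact xK
        exact Or.inr (Or.inl (Finset.mem_image.2 ⟨a * x, hm, by group⟩))
      · -- x ∈ K \ H : use x*b
        have hm : x * b ∈ T := by
          refine hTmem _ (hP2 x (hAS x hx) b (hAS b hbA)) ?_ ?_
          · rw [H.mul_mem_cancel_right hbH]; exact xH
          · rw [K.mul_mem_cancel_left xK]; exact hbK
        exact Or.inr (Or.inr (Or.inl (Finset.mem_image.2 ⟨x * b, hm, by group⟩)))
      · exact Or.inl (hTmem x (hP1 x (hAS x hx)) xH xK)
    · -- branch 3 : A ∩ (H \ K) = ∅, i.e. A ∩ H ⊆ K ; right multiplication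
      push_neg at hcase2
      obtain ⟨c, hcA, hcK⟩ := hexK
      have hcH : c ∉ H := fun h => hcK (hcase2 c hcA h)
      by_cases hbad : ∃ y ∈ A, y ∈ K ∧ y ∉ H ∧ y * c ∈ H
      · obtain ⟨y, hyA, hyK, hyH, hycH⟩ := hbad
        set d : G := y * c with hd
        have hdH : d ∈ H := hycH
        have hdK : d ∉ K := fun h => hcK (by
          have : y⁻¹ * d ∈ K := K.mul_mem (K.inv_mem hyK) h
          simpa [hd, mul_assoc] using this)
        refine key T (T.image (fun t => t * c⁻¹)) (T.image (fun t => t * d⁻¹)) T ?_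
          le_rfl (Finset.card_image_le) (Finset.card_image_le) le_rfl
        intro x hx
        by_cases xH : x ∈ H <;> by_cases xK : x ∈ K
        all_goals try { exact Or.inl (hTmem x (hP1 x (hAS x hx)) xH xK) }
        · -- x ∈ H ∩ K : x*c works
          have hm : x * c ∈ T := by
            refine hTmem _ (hP2 x (hAS x hx) c (hAS c hcA)) ?_ ?_
            · rw [H.mul_mem_cancel_left xH]; exact hcH
            · rw [K.mul_mem_cancel_left xK]; exact hcK
          exact Or.inr (Or.inl (Finset.mem_image.2 ⟨x * c, hm, by group⟩))
        · -- x ∈ H \ K impossible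
          exact absurd (hcase2 x hx xH) (fun h => xK h)
        · -- x ∈ K \ H : either x*c or x*d
          by_cases hxc : x * c ∈ H
          · have hm : x * d ∈ T := by
              have hPm : x * d ∈ S * S * S * S := by
                have := hP3 x (hAS x hx) y (hAS y hyA) c (hAS c hcA)
                simpa [hd, mul_assoc] using this
              refine hTmem _ hPm ?_ ?_
              · rw [H.mul_mem_cancel_right hdH]; exact xH
              · rw [K.mul_mem_cancel_left xK]; exact hdK
            exact Or.inr (Or.inr (Or.inl (Finset.mem_image.2 ⟨x * d, hm, by group⟩)))
          · have hm : x * c ∈ T := by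
              refine hTmem _ (hP2 x (hAS x hx) c (hAS c hcA)) hxc ?_
              rw [K.mul_mem_cancel_left xK]; exact hcK
            exact Or.inr (Or.inl (Finset.mem_image.2 ⟨x * c, hm, by group⟩))
      · -- no bad element
        push_neg at hbad
        refine key T (T.image (fun t => t * c⁻¹)) T T ?_ le_rfl (Finset.card_image_le)
          le_rfl le_rfl
        intro x hx
        by_cases xH : x ∈ H <;> by_cases xK : x ∈ K
        all_goals try { exact Or.inl (hTmem x (hP1 x (hAS x hx)) xH xK) }
        · have hm : x * c ∈ T := by
            refine hTmem _ (hP2 x (hAS x hx) c (hAS c hcA)) ?_ ?_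
            · rw [H.mul_mem_cancel_left xH]; exact hcH
            · rw [K.mul_mem_cancel_left xK]; exact hcK
          exact Or.inr (Or.inl (Finset.mem_image.2 ⟨x * c, hm, by group⟩))
        · exact absurd (hcase2 x hx xH) (fun h => xK h)
        · have hm : x * c ∈ T := by
            refine hTmem _ (hP2 x (hAS x hx) c (hAS c hcA)) ?_ ?_
            · exact hbad x hx xK xH
            · rw [K.mul_mem_cancel_left xK]; exact hcK
          exact Or.inr (Or.inl (Finset.mem_image.2 ⟨x * c, hm, by group⟩))
  · -- branch 2 : A ∩ (K \ H) = ∅, i.e. A ∩ K ⊆ H ; left multiplication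
    push_neg at hcase1
    obtain ⟨c, hcA, hcH⟩ := hexH
    have hcK : c ∉ K := fun h => hcH (hcase1 c hcA h)
    by_cases hbad : ∃ y ∈ A, y ∈ H ∧ y ∉ K ∧ c * y ∈ K
    · obtain ⟨y, hyA, hyH, hyK, hcyK⟩ := hbad
      set d : G := c * y with hd
      have hdK : d ∈ K := hcyK
      have hdH : d ∉ H := fun h => hcH (by
        have : d * y⁻¹ ∈ H := H.mul_mem h (H.inv_mem hyH)
        simpa [hd, mul_assoc] using this)
      refine key T (T.image (fun t => c⁻¹ * t)) (T.image (fun t => d⁻¹ * t)) T ?_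
        le_rfl (Finset.card_image_le) (Finset.card_image_le) le_rfl
      intro x hx
      by_cases xH : x ∈ H <;> by_cases xK : x ∈ K
      all_goals try { exact Or.inl (hTmem x (hP1 x (hAS x hx)) xH xK) }
      · -- x ∈ H ∩ K : c*x works
        have hm : c * x ∈ T := by
          refine hTmem _ (hP2 c (hAS c hcA) x (hAS x hx)) ?_ ?_
          · rw [H.mul_mem_cancel_right xH]; exact hcH
          · rw [K.mul_mem_cancel_right xK]; exact hcK
        exact Or.inr (Or.inl (Finset.mem_image.2 ⟨c * x, hm, by group⟩))
      · -- x ∈ H \ K : either c*x or d*x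
        by_cases hxc : c * x ∈ K
        · have hm : d * x ∈ T := by
            have hPm : d * x ∈ S * S * S * S := by
              have := hP3 c (hAS c hcA) y (hAS y hyA) x (hAS x hx)
              simpa [hd, mul_assoc] using this
            refine hTmem _ hPm ?_ ?_
            · rw [H.mul_mem_cancel_right xH]; exact hdH
            · rw [K.mul_mem_cancel_left hdK]; exact xK
          exact Or.inr (Or.inr (Or.inl (Finset.mem_image.2 ⟨d * x, hm, by group⟩)))
        · have hm : c * x ∈ T := by
            refine hTmem _ (hP2 c (hAS c hcA) x (hAS x hx)) ?_ hxc
            rw [H.mul_mem_cancel_right xH]; exact hcH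
          exact Or.inr (Or.inl (Finset.mem_image.2 ⟨c * x, hm, by group⟩))
      · -- x ∈ K \ H impossible
        exact absurd (hcase1 x hx xK) (fun h => xH h)
    · push_neg at hbad
      refine key T (T.image (fun t => c⁻¹ * t)) T T ?_ le_rfl (Finset.card_image_le)
        le_rfl le_rfl
      intro x hx
      by_cases xH : x ∈ H <;> by_cases xK : x ∈ K
      all_goals try { exact Or.inl (hTmem x (hP1 x (hAS x hx)) xH xK) }
      · have hm : c * x ∈ T := by
          refine hTmem _ (hP2 c (hAS c hcA) x (hAS x hx)) ?_ ?_
          · rw [H.mul_mem_cancel_right xH]; exact hcH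
          · rw [K.mul_mem_cancel_right xK]; exact hcK
        exact Or.inr (Or.inl (Finset.mem_image.2 ⟨c * x, hm, by group⟩))
      · have hm : c * x ∈ T := by
          refine hTmem _ (hP2 c (hAS c hcA) x (hAS x hx)) ?_ ?_
          · rw [H.mul_mem_cancel_right xH]; exact hcH
          · exact hbad x hx xH xK
        exact Or.inr (Or.inl (Finset.mem_image.2 ⟨c * x, hm, by group⟩))
      · exact absurd (hcase1 x hx xK) (fun h => xH h)
end

section
/- Let F be a field and U a finite nonempty subset of SL₂(F) containing no triangular matrices (i.e., every u = [[a,b],[c,d]] ∈ U has b ≠ 0 and c ≠ 0). Then |Tr(U·U⁻¹)| ≥ |U| / (2·|Diag(U)|), where Diag(U) = {(a,d) : [[a,b],[c,d]] ∈ U} is the set of diagonals occurring in U. -/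
open Pointwise Polynomial

lemma quad_card {F : Type*} [Field F] [DecidableEq F] (A B C : F) (hA : A ≠ 0)
    (s : Finset F) (hs : ∀ x ∈ s, A * x ^ 2 + B * x + C = 0) : s.card ≤ 2 := by
  set p : F[X] := Polynomial.C A * X ^ 2 + Polynomial.C B * X + Polynomial.C C with hp
  have hdeg : p.natDegree = 2 := Polynomial.natDegree_quadratic hA
  have hp0 : p ≠ 0 := by intro h; rw [h] at hdeg; simp at hdeg
  have hsub : s ⊆ p.roots.toFinset := by
    intro x hx
    rw [Multiset.mem_toFinset, Polynomial.mem_roots hp0]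
    simp only [hp, Polynomial.IsRoot, eval_add, eval_mul, eval_pow, eval_C, eval_X]
    exact hs x hx
  calc s.card ≤ p.roots.toFinset.card := Finset.card_le_card hsub
    _ ≤ Multiset.card p.roots := Multiset.toFinset_card_le _
    _ ≤ p.natDegree := Polynomial.card_roots' _
    _ = 2 := hdeg

lemma sl2_ext' {F : Type*} [Field F] {x y : Matrix.SpecialLinearGroup (Fin 2) F}
    (h00 : x.val 0 0 = y.val 0 0) (h01 : x.val 0 1 = y.val 0 1)
    (h11 : x.val 1 1 = y.val 1 1) (hb : x.val 0 1 ≠ 0) : x = y := by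
  have hx := x.prop; have hy := y.prop
  rw [Matrix.det_fin_two] at hx hy
  have h10 : x.val 1 0 = y.val 1 0 := by
    apply mul_left_cancel₀ hb
    linear_combination hy - hx + x.val 1 1 * h00 - y.val 1 0 * h01 + y.val 0 0 * h11
  ext i j
  fin_cases i <;> fin_cases j <;> assumption

theorem stmt_19 {F : Type*} [Field F] [DecidableEq F]
    [DecidableEq (Matrix.SpecialLinearGroup (Fin 2) F)]
    (U : Finset (Matrix.SpecialLinearGroup (Fin 2) F)) (hU : U.Nonempty)
    (htri : ∀ u ∈ U, u.val 0 1 ≠ 0 ∧ u.val 1 0 ≠ 0) :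
    (U.card : ℝ) / (2 * (U.image fun u => (u.val 0 0, u.val 1 1)).card) ≤
      (((U * U⁻¹).image fun g => Matrix.trace g.val).card : ℝ) := by
  classical
  set D := U.image fun u => (u.val 0 0, u.val 1 1) with hD
  set T := (U * U⁻¹).image fun g => Matrix.trace g.val with hT
  have hDpos : 0 < D.card := Finset.card_pos.2 (hU.image _)
  have key : U.card ≤ (2 * T.card) * D.card := by
    apply Finset.card_le_mul_card_image
    intro d hd
    obtain ⟨u₀, hu₀U, hu₀d⟩ := Finset.mem_image.1 hd
    set V := U.filter (fun u => (u.val 0 0, u.val 1 1) = d) with hV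
    have hVU : V ⊆ U := Finset.filter_subset _ _
    set a := u₀.val 0 0 with ha
    set δ := u₀.val 1 1 with hδ
    set b := u₀.val 0 1 with hb
    set c := u₀.val 1 0 with hc
    have hb0 : b ≠ 0 := (htri u₀ hu₀U).1
    have hc0 : c ≠ 0 := (htri u₀ hu₀U).2
    have hdet₀ : a * δ - b * c = 1 := by
      have := u₀.prop; rw [Matrix.det_fin_two] at this; exact this
    have hA : a * δ - 1 ≠ 0 := by
      intro h
      exact mul_ne_zero hb0 hc0 (by linear_combination h - hdet₀)
    set f : Matrix.SpecialLinearGroup (Fin 2) F → F :=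
      fun v => Matrix.trace ((u₀ * v⁻¹) : Matrix.SpecialLinearGroup (Fin 2) F).val with hf
    -- trace formula
    have htr : ∀ v : Matrix.SpecialLinearGroup (Fin 2) F,
        f v = a * v.val 1 1 - b * v.val 1 0 - c * v.val 0 1 + δ * v.val 0 0 := by
      intro v
      simp only [hf]
      rw [Matrix.SpecialLinearGroup.SL2_inv_expl v]
      change Matrix.trace (u₀.val * !![v.val 1 1, -v.val 0 1; -v.val 1 0, v.val 0 0]) = _
      simp [Matrix.trace_fin_two, Matrix.mul_apply, Fin.sum_univ_two]
      ring
    have hsub : V.image f ⊆ T := by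
      intro t ht
      obtain ⟨v, hvV, hvt⟩ := Finset.mem_image.1 ht
      rw [hT]
      exact Finset.mem_image.2 ⟨u₀ * v⁻¹,
        Finset.mul_mem_mul hu₀U (Finset.inv_mem_inv (hVU hvV)), hvt⟩
    have hfib : ∀ t ∈ V.image f, (V.filter fun v => f v = t).card ≤ 2 := by
      intro t _
      set W := V.filter fun v => f v = t with hW
      have hWdiag : ∀ v ∈ W, v.val 0 0 = a ∧ v.val 1 1 = δ ∧ v.val 0 1 ≠ 0 ∧
          a * δ - v.val 0 1 * v.val 1 0 = 1 ∧ f v = t := by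
        intro v hv
        rw [hW, Finset.mem_filter, hV, Finset.mem_filter] at hv
        obtain ⟨⟨hvU, hvd⟩, hvt⟩ := hv
        have h1 : v.val 0 0 = a := by
          have := congrArg Prod.fst hvd
          simp at this; rw [this, ← hu₀d]
        have h2 : v.val 1 1 = δ := by
          have := congrArg Prod.snd hvd
          simp at this; rw [this, ← hu₀d]
        have h3 : v.val 0 1 ≠ 0 := (htri v hvU).1
        have h4 : a * δ - v.val 0 1 * v.val 1 0 = 1 := by
          have := v.prop; rw [Matrix.det_fin_two] at this
          rw [← h1, ← h2]; exact this
        exact ⟨h1, h2, h3, h4, hvt⟩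
      have hinj : Set.InjOn (fun v : Matrix.SpecialLinearGroup (Fin 2) F => v.val 0 1) W := by
        intro x hx y hy hxy
        obtain ⟨hx1, hx2, hx3, -, -⟩ := hWdiag x hx
        obtain ⟨hy1, hy2, -, -, -⟩ := hWdiag y hy
        exact sl2_ext' (by rw [hx1, hy1]) hxy (by rw [hx2, hy2]) hx3
      rw [← Finset.card_image_of_injOn hinj]
      apply quad_card (a * δ - 1) ((t - 2 * (a * δ)) * b) ((a * δ - 1) * b ^ 2) hA
      intro x hx
      obtain ⟨v, hvW, hvx⟩ := Finset.mem_image.1 hx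
      obtain ⟨h1, h2, h3, h4, h5⟩ := hWdiag v hvW
      rw [htr v, h1, h2] at h5
      subst hvx
      linear_combination (-(b * v.val 0 1)) * h5 + b ^ 2 * h4 + v.val 0 1 ^ 2 * hdet₀
    calc V.card ≤ 2 * (V.image f).card := Finset.card_le_mul_card_image V 2 hfib
      _ ≤ 2 * T.card := by
          exact Nat.mul_le_mul_left 2 (Finset.card_le_card hsub)
  have key' : (U.card : ℝ) ≤ 2 * T.card * D.card := by exact_mod_cast key
  have hD0 : (0 : ℝ) < D.card := by exact_mod_cast hDpos
  rw [div_le_iff₀ (by positivity)]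
  calc (U.card : ℝ) ≤ 2 * T.card * D.card := key'
    _ = T.card * (2 * D.card) := by ring
end
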